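/- Let u₁, …, u_m ∈ c₀ be linearly independent and let y ∈ ℝ^m. Define L : ℓ₁(ℕ) → ℝ^m by L(x) := (⟨u_j, x⟩)_{j=1}^m. Then x̂ ∈ ℓ₁(ℕ) is a solution of the minimum norm interpolation problem inf{‖x‖₁ : x ∈ ℓ₁(ℕ), L(x) = y} if and only if there exists c ∈ ℝ^m such that L(x̂) = y and x̂ = P(x̂ − S(Σ_{j=1}^m c_j u_j)), where P is the componentwise soft-threshold operator P(z)_i := sign(z_i) · max(|z_i| − 1, 0) and S : c₀ → c₀ is the truncation operator given by S(u)_i := u_i if |u_i| = ‖u‖_∞ and S(u)_i := 0 otherwise. (The first equation is the fixed-point equation c = prox_{ι_y*}(c + L(x̂)) since the proximity operator of the conjugate ι_y* of the indicator function of {y} is the translation a ↦ a − y.) -/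

import Mathlib

open Filter Topology
open scoped Classical

open scoped Pointwise

lemma soft_fixed_iff (x s : ℝ) :
    x = Real.sign (x - s) * max (|x - s| - 1) 0 ↔
      ((x = 0 ∧ |s| ≤ 1) ∨ (x ≠ 0 ∧ s = -Real.sign x)) := by
  rcases lt_trichotomy x 0 with hx | hx | hx
  · -- x < 0 : condition is s = 1
    have hsx : Real.sign x = -1 := Real.sign_of_neg hx
    constructor
    · intro h
      refine Or.inr ⟨hx.ne, ?_⟩
      rw [hsx]
      -- show s = 1
      by_contra hs
      rcases lt_trichotomy (x - s) 0 with ht | ht | ht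
      · have hsg : Real.sign (x - s) = -1 := Real.sign_of_neg ht
        rw [hsg, abs_of_neg ht] at h
        rcases le_or_gt (-(x-s) - 1) 0 with h1 | h1
        · rw [max_eq_right h1] at h; linarith
        · rw [max_eq_left h1.le] at h
          -- x = -1 * (-(x-s) - 1) = x - s + 1, so s = 1
          apply hs; linarith
      · rw [ht, Real.sign_zero, zero_mul] at h; linarith
      · have hsg : Real.sign (x - s) = 1 := Real.sign_of_pos ht
        rw [hsg, abs_of_pos ht, one_mul] at h
        have := le_max_right (x - s - 1) (0:ℝ)
        linarith
    · rintro (⟨h0, _⟩ | ⟨_, hs⟩); · exact absurd h0 hx.ne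
      have hs1 : s = 1 := by rw [hs, hsx]; ring
      subst hs1
      have ht : x - 1 < 0 := by linarith
      rw [Real.sign_of_neg ht, abs_of_neg ht]
      rw [max_eq_left (by linarith : -(x - 1) - 1 ≥ 0)]
      ring
  · -- x = 0 : condition is |s| ≤ 1
    subst hx
    constructor
    · intro h
      refine Or.inl ⟨rfl, ?_⟩
      by_contra hs
      push_neg at hs
      rcases lt_trichotomy s 0 with h1 | h1 | h1
      · have ht : (0:ℝ) - s > 0 := by linarith
        rw [Real.sign_of_pos ht, abs_of_pos ht, one_mul] at h
        have : |s| = -s := abs_of_neg h1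
        rw [this] at hs
        rw [max_eq_left (by linarith)] at h
        linarith
      · subst h1; simp at hs; linarith
      · have ht : (0:ℝ) - s < 0 := by linarith
        rw [Real.sign_of_neg ht, abs_of_neg ht] at h
        have : |s| = s := abs_of_pos h1
        rw [this] at hs
        rw [max_eq_left (by linarith)] at h
        linarith
    · rintro (⟨_, hs⟩ | ⟨h0, _⟩); swap; · exact absurd rfl h0
      have : |0 - s| - 1 ≤ 0 := by rw [zero_sub, abs_neg]; linarith
      rw [max_eq_right this, mul_zero]
  · -- x > 0 : condition is s = -1
    have hsx : Real.sign x = 1 := Real.sign_of_pos hx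
    constructor
    · intro h
      refine Or.inr ⟨hx.ne', ?_⟩
      rw [hsx]
      by_contra hs
      rcases lt_trichotomy (x - s) 0 with ht | ht | ht
      · have hsg : Real.sign (x - s) = -1 := Real.sign_of_neg ht
        rw [hsg] at h
        have := le_max_right (|x - s| - 1) 0
        nlinarith [le_max_right (|x - s| - 1) (0:ℝ)]
      · rw [ht, Real.sign_zero, zero_mul] at h; linarith
      · have hsg : Real.sign (x - s) = 1 := Real.sign_of_pos ht
        rw [hsg, abs_of_pos ht, one_mul] at h
        rcases le_or_gt (x - s - 1) 0 with h1 | h1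
        · rw [max_eq_right h1] at h; linarith
        · rw [max_eq_left h1.le] at h; apply hs; linarith
    · rintro (⟨h0, _⟩ | ⟨_, hs⟩); · exact absurd h0 hx.ne'
      have hs1 : s = -1 := by rw [hs, hsx]
      subst hs1
      have ht : x - -1 > 0 := by linarith
      rw [Real.sign_of_pos ht, abs_of_pos ht, one_mul]
      rw [max_eq_left (by linarith : x - -1 - 1 ≥ 0)]
      ring

lemma bdd_of_tendsto {f : ℕ → ℝ} (hf : Tendsto f atTop (𝓝 0)) :
    ∃ C, ∀ i, |f i| ≤ C := by
  have h : Tendsto (fun i => |f i|) atTop (𝓝 0) := by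
    simpa using hf.abs
  obtain ⟨C, hC⟩ := h.bddAbove_range
  exact ⟨C, fun i => hC ⟨i, rfl⟩⟩

lemma summable_mul_of_bdd {u x : ℕ → ℝ} (hub : ∃ C, ∀ i, |u i| ≤ C)
    (hx : Summable fun i => |x i|) : Summable (fun i => u i * x i) := by
  obtain ⟨C, hC⟩ := hub
  refine Summable.of_abs (Summable.of_nonneg_of_le (fun i => abs_nonneg _) (fun i => ?_)
    (hx.mul_left C))
  rw [abs_mul]
  exact mul_le_mul_of_nonneg_right (hC i) (abs_nonneg _)

lemma summable_u_mul {m : ℕ} {u : Fin m → ℕ → ℝ}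
    (hu0 : ∀ j, Tendsto (u j) atTop (𝓝 0)) (j : Fin m) {x : ℕ → ℝ}
    (hx : Summable fun i => |x i|) : Summable (fun i => u j i * x i) :=
  summable_mul_of_bdd (bdd_of_tendsto (hu0 j)) hx

lemma tsum_v_mul {m : ℕ} {u : Fin m → ℕ → ℝ}
    (hu0 : ∀ j, Tendsto (u j) atTop (𝓝 0)) (c : Fin m → ℝ) {x : ℕ → ℝ}
    (hx : Summable fun i => |x i|) :
    ∑' i, (∑ j, c j * u j i) * x i = ∑ j, c j * ∑' i, u j i * x i := by
  have h1 : ∀ i, (∑ j, c j * u j i) * x i = ∑ j, c j * (u j i * x i) := by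
    intro i; rw [Finset.sum_mul]; congr 1; ext j; ring
  simp_rw [h1]
  rw [Summable.tsum_finsetSum (fun j _ => ((summable_u_mul hu0 j hx).mul_left (c j)))]
  congr 1; ext j; rw [tsum_mul_left]

-- surjectivity of L on finitely supported sequences
lemma exists_feasible {m : ℕ} (u : Fin m → ℕ → ℝ) (hu : LinearIndependent ℝ u)
    (z : Fin m → ℝ) :
    ∃ x : ℕ → ℝ, (∃ s : Finset ℕ, ∀ i ∉ s, x i = 0) ∧
      ∀ j, ∑' i, u j i * x i = z j := by
  set w : ℕ → (Fin m → ℝ) := fun i j => u j i with hw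
  have hspan : Submodule.span ℝ (Set.range w) = ⊤ := by
    by_contra hne
    obtain ⟨f, hf0, hf⟩ := Submodule.exists_dual_map_eq_bot_of_lt_top
      (lt_top_iff_ne_top.2 hne) inferInstance
    have hker : ∀ i, f (w i) = 0 := by
      intro i
      have : f (w i) ∈ (Submodule.span ℝ (Set.range w)).map f :=
        ⟨w i, Submodule.subset_span ⟨i, rfl⟩, rfl⟩
      rw [hf] at this
      simpa using this
    set c : Fin m → ℝ := fun j => f (Pi.single j 1) with hc
    have hfc : ∀ v : Fin m → ℝ, f v = ∑ j, v j * c j := by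
      intro v
      rw [LinearMap.pi_apply_eq_sum_univ f v]
      refine Finset.sum_congr rfl fun j _ => ?_
      rw [smul_eq_mul, hc]
      have : (fun j_1 => if j = j_1 then (1:ℝ) else 0) = Pi.single j 1 := by
        funext k; simp [Pi.single_apply, eq_comm]
      simp only [this]
    have hcu : ∑ j, c j • u j = 0 := by
      funext i
      have := hker i
      rw [hfc] at this
      simpa [hw, mul_comm] using this
    have hc0 : ∀ j, c j = 0 := Fintype.linearIndependent_iff.mp hu c hcu
    apply hf0
    apply LinearMap.ext
    intro v
    rw [hfc]
    simp [hc0]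
  have hz : z ∈ Submodule.span ℝ (Set.range w) := hspan ▸ Submodule.mem_top
  obtain ⟨d, hd⟩ := (Finsupp.mem_span_range_iff_exists_finsupp).1 hz
  refine ⟨fun i => d i, ⟨d.support, fun i hi => Finsupp.notMem_support_iff.1 hi⟩, ?_⟩
  intro j
  have h1 : ∀ i ∉ d.support, u j i * d i = 0 := by
    intro i hi
    rw [Finsupp.notMem_support_iff.1 hi, mul_zero]
  rw [tsum_eq_sum h1]
  have hdz : ∑ i ∈ d.support, d i • w i = z := hd
  have h2 := congrFun hdz j
  rw [Finset.sum_apply] at h2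
  rw [← h2]
  exact Finset.sum_congr rfl fun i _ => by simp [hw, mul_comm]
lemma exists_certificate {m : ℕ} (u : Fin m → ℕ → ℝ)
    (hu0 : ∀ j, Tendsto (u j) atTop (𝓝 0)) (hu : LinearIndependent ℝ u)
    (y : Fin m → ℝ) (xhat : ℕ → ℝ) (hxhat : Summable fun i => |xhat i|)
    (hint : ∀ j, ∑' i, u j i * xhat i = y j)
    (hmin : ∀ x : ℕ → ℝ, Summable (fun i => |x i|) →
          (∀ j, ∑' i, u j i * x i = y j) → ∑' i, |xhat i| ≤ ∑' i, |x i|)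
    (hne : ∃ i, xhat i ≠ 0) :
    ∃ c : Fin m → ℝ, (∀ i, |∑ j, c j * u j i| ≤ 1) ∧
      ∑' i, (∑ j, c j * u j i) * xhat i = -∑' i, |xhat i| := by
  classical
  set r : ℝ := ∑' i, |xhat i| with hr
  obtain ⟨i₀, hi₀⟩ := hne
  have hrpos : 0 < r := by
    have h1 : |xhat i₀| ≤ r := Summable.le_tsum hxhat i₀ (fun j _ => abs_nonneg _)
    have h2 : 0 < |xhat i₀| := abs_pos.2 hi₀
    linarith
  have hy : y ≠ 0 := by
    intro hy0
    have h0 : ∀ j, ∑' i, u j i * (0:ℝ) = y j := by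
      intro j; rw [hy0]; simp
    have := hmin 0 (by simpa using summable_zero) (by simpa using h0)
    simp only [Pi.zero_apply, abs_zero, tsum_zero] at this
    linarith
  -- the value function
  set S : (Fin m → ℝ) → Set ℝ := fun z =>
    {a | ∃ x : ℕ → ℝ, Summable (fun i => |x i|) ∧
      (∀ j, ∑' i, u j i * x i = z j) ∧ ∑' i, |x i| = a} with hS
  have hSne : ∀ z, (S z).Nonempty := by
    intro z
    obtain ⟨x, ⟨s, hs⟩, hx⟩ := exists_feasible u hu z
    refine ⟨∑' i, |x i|, x, ?_, hx, rfl⟩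
    exact summable_of_ne_finset_zero (s := s) (fun i hi => by rw [hs i hi, abs_zero])
  have hSbd : ∀ z, ∀ a ∈ S z, (0:ℝ) ≤ a := by
    rintro z a ⟨x, _, _, rfl⟩
    exact tsum_nonneg (fun i => abs_nonneg _)
  set N : (Fin m → ℝ) → ℝ := fun z => sInf (S z) with hN
  have hNbdd : ∀ z, BddBelow (S z) := fun z => ⟨0, fun a ha => hSbd z a ha⟩
  have hNnn : ∀ z, 0 ≤ N z := fun z => le_csInf (hSne z) (hSbd z)
  have hNle : ∀ x : ℕ → ℝ, Summable (fun i => |x i|) →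
      N (fun j => ∑' i, u j i * x i) ≤ ∑' i, |x i| := by
    intro x hx
    exact csInf_le (hNbdd _) ⟨x, hx, fun j => rfl, rfl⟩
  -- scaling
  have hSsmul : ∀ (t : ℝ), 0 < t → ∀ z, S (t • z) = t • S z := by
    intro t ht z
    ext a
    constructor
    · rintro ⟨x, hx, hxz, rfl⟩
      refine ⟨∑' i, |t⁻¹ * x i|, ⟨fun i => t⁻¹ * x i, ?_, ?_, rfl⟩, ?_⟩
      · simpa [abs_mul] using (hx.mul_left |t⁻¹|)
      · intro j
        have : ∀ i, u j i * (t⁻¹ * x i) = t⁻¹ * (u j i * x i) := fun i => by ring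
        simp_rw [this, tsum_mul_left, hxz j]
        simp [Pi.smul_apply, smul_eq_mul]
        field_simp
      · simp_rw [abs_mul, tsum_mul_left, smul_eq_mul, ← mul_assoc]
        rw [abs_of_pos (inv_pos.2 ht)]
        field_simp
    · rintro ⟨a, ⟨x, hx, hxz, rfl⟩, rfl⟩
      refine ⟨fun i => t * x i, ?_, ?_, ?_⟩
      · simpa [abs_mul] using (hx.mul_left |t|)
      · intro j
        have : ∀ i, u j i * (t * x i) = t * (u j i * x i) := fun i => by ring
        simp_rw [this, tsum_mul_left, hxz j]
        simp [Pi.smul_apply, smul_eq_mul]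
      · simp_rw [abs_mul, tsum_mul_left, smul_eq_mul]
        rw [abs_of_pos ht]
  have hNhom : ∀ (t : ℝ), 0 < t → ∀ z, N (t • z) = t * N z := by
    intro t ht z
    rw [hN]
    simp only
    rw [hSsmul t ht z, Real.sInf_smul_of_nonneg ht.le, smul_eq_mul]
  -- subadditivity
  have hNadd : ∀ z1 z2, N (z1 + z2) ≤ N z1 + N z2 := by
    intro z1 z2
    have key : ∀ a ∈ S z1, ∀ b ∈ S z2, N (z1 + z2) ≤ a + b := by
      rintro a ⟨x1, hx1, hxz1, rfl⟩ b ⟨x2, hx2, hxz2, rfl⟩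
      have hsum : Summable (fun i => |x1 i + x2 i|) :=
        Summable.of_nonneg_of_le (fun i => abs_nonneg _) (fun i => abs_add_le _ _) (hx1.add hx2)
      have hfeas : ∀ j, ∑' i, u j i * (x1 i + x2 i) = (z1 + z2) j := by
        intro j
        have : ∀ i, u j i * (x1 i + x2 i) = u j i * x1 i + u j i * x2 i := fun i => by ring
        simp_rw [this]
        rw [Summable.tsum_add (summable_u_mul hu0 j hx1) (summable_u_mul hu0 j hx2), hxz1 j, hxz2 j]
        simp
      calc N (z1 + z2) ≤ ∑' i, |x1 i + x2 i| :=
              csInf_le (hNbdd _) ⟨fun i => x1 i + x2 i, hsum, hfeas, rfl⟩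
        _ ≤ ∑' i, (|x1 i| + |x2 i|) := Summable.tsum_le_tsum (fun i => abs_add_le _ _) hsum (hx1.add hx2)
        _ = (∑' i, |x1 i|) + ∑' i, |x2 i| := Summable.tsum_add hx1 hx2
    have h1 : N (z1 + z2) - N z1 ≤ N z2 := by
      refine le_csInf (hSne z2) (fun b hb => ?_)
      rw [sub_le_iff_le_add]
      have h2 : N (z1 + z2) - b ≤ N z1 := by
        refine le_csInf (hSne z1) (fun a ha => ?_)
        have := key a ha b hb
        linarith
      linarith
    linarith
  -- N y = r
  have hNy : N y = r := by
    refine le_antisymm ?_ ?_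
    · have := hNle xhat hxhat
      have h2 : (fun j => ∑' i, u j i * xhat i) = y := funext hint
      rwa [h2] at this
    · refine le_csInf (hSne y) ?_
      rintro a ⟨x, hx, hxz, rfl⟩
      exact hmin x hx hxz
  -- Hahn-Banach extension
  set f : (Fin m → ℝ) →ₗ.[ℝ] ℝ := LinearPMap.mkSpanSingleton y r hy with hf
  have hfle : ∀ zz : f.domain, f zz ≤ N zz := by
    rintro ⟨zv, hzv⟩
    obtain ⟨t, ht⟩ := Submodule.mem_span_singleton.1 hzv
    have hmem : t • y ∈ f.domain := by rw [ht]; exact hzv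
    have heq : (⟨zv, hzv⟩ : f.domain) = ⟨t • y, hmem⟩ := Subtype.ext (by simp [ht])
    rw [heq]
    rw [LinearPMap.mkSpanSingleton'_apply]
    simp only [smul_eq_mul]
    rcases lt_trichotomy t 0 with h1 | h1 | h1
    · have : t * r ≤ 0 := mul_nonpos_iff.2 (Or.inr ⟨h1.le, hrpos.le⟩)
      exact this.trans (hNnn _)
    · subst h1; simpa using hNnn ((0:ℝ) • y)
    · rw [hNhom t h1 y, hNy]; exact le_rfl
  obtain ⟨g, hgf, hgle⟩ := exists_extension_of_le_sublinear f N hNhom hNadd hfle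
  have hgy : g y = r := by
    have h1 := hgf ⟨y, Submodule.mem_span_singleton_self y⟩
    rw [h1]
    exact LinearPMap.mkSpanSingleton_apply ℝ ℝ hy r
  -- represent g
  have hgc : ∀ z : Fin m → ℝ, g z = ∑ j, z j * g (Pi.single j 1) := by
    intro z
    rw [LinearMap.pi_apply_eq_sum_univ g z]
    refine Finset.sum_congr rfl fun j _ => ?_
    rw [smul_eq_mul]
    have : (fun j_1 => if j = j_1 then (1:ℝ) else 0) = Pi.single j 1 := by
      funext k; simp [Pi.single_apply, eq_comm]
    simp only [this]
  set c : Fin m → ℝ := fun j => -g (Pi.single j 1) with hc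
  have hgc' : ∀ z : Fin m → ℝ, g z = -∑ j, c j * z j := by
    intro z
    rw [hgc z, ← Finset.sum_neg_distrib]
    refine Finset.sum_congr rfl fun j _ => ?_
    rw [hc]; ring
  -- key inequality for arbitrary summable x
  have hkey : ∀ x : ℕ → ℝ, Summable (fun i => |x i|) →
      -∑ j, c j * ∑' i, u j i * x i ≤ ∑' i, |x i| := by
    intro x hx
    have h1 := hgle (fun j => ∑' i, u j i * x i)
    rw [hgc'] at h1
    exact h1.trans (hNle x hx)
  -- coordinate bound
  have hbound : ∀ i₁ : ℕ, |∑ j, c j * u j i₁| ≤ 1 := by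
    intro i₁
    have hδ : ∀ t : ℝ, -(t * ∑ j, c j * u j i₁) ≤ |t| := by
      intro t
      set x : ℕ → ℝ := fun i => if i = i₁ then t else 0 with hx
      have hxs : Summable (fun i => |x i|) := by
        refine summable_of_ne_finset_zero (s := {i₁}) (fun i hi => ?_)
        rw [hx]
        simp only [Finset.mem_singleton] at hi
        simp [hi]
      have hLx : ∀ j, ∑' i, u j i * x i = u j i₁ * t := by
        intro j
        have : (fun i => u j i * x i) = fun i => if i = i₁ then u j i₁ * t else 0 := by
          funext i
          rw [hx]
          by_cases hi : i = i₁ <;> simp [hi]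
        rw [this, tsum_ite_eq]
      have hsx : ∑' i, |x i| = |t| := by
        have : (fun i => |x i|) = fun i => if i = i₁ then |t| else 0 := by
          funext i
          rw [hx]
          by_cases hi : i = i₁ <;> simp [hi]
        rw [this, tsum_ite_eq]
      have := hkey x hxs
      rw [hsx] at this
      have e : ∑ j, c j * ∑' i, u j i * x i = t * ∑ j, c j * u j i₁ := by
        rw [Finset.mul_sum]
        refine Finset.sum_congr rfl fun j _ => ?_
        rw [hLx j]; ring
      rw [e] at this
      exact this
    have h1 := hδ 1
    have h2 := hδ (-1)
    simp only [abs_one, abs_neg, one_mul, neg_mul, neg_neg] at h1 h2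
    rw [abs_le]
    constructor <;> linarith
  refine ⟨c, hbound, ?_⟩
  rw [tsum_v_mul hu0 c hxhat]
  have h2 : ∑ j, c j * ∑' i, u j i * xhat i = ∑ j, c j * y j := by
    refine Finset.sum_congr rfl fun j _ => by rw [hint j]
  rw [h2]
  have h3 := hgc' y
  rw [hgy] at h3
  show ∑ j, c j * y j = -r
  linarith
lemma sign_abs_one {t : ℝ} (ht : t ≠ 0) : |Real.sign t| = 1 := by
  rcases lt_trichotomy t 0 with h | h | h
  · rw [Real.sign_of_neg h]; norm_num
  · exact absurd h ht
  · rw [Real.sign_of_pos h]; norm_num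

lemma real_sign_mul_self (t : ℝ) : Real.sign t * t = |t| := by
  rcases lt_trichotomy t 0 with h | h | h
  · rw [Real.sign_of_neg h, abs_of_neg h]; ring
  · simp [h]
  · rw [Real.sign_of_pos h, abs_of_pos h]; ring

/-- Fixed-point characterization of minimum norm interpolation in
`ℓ₁(ℕ)`: `x̂` is a solution iff for some `c ∈ ℝ^m` one has `L(x̂) = y` (equivalently the
fixed-point equation `c = prox_{ι_y*}(c + L(x̂))`, since `prox_{ι_y*}(a) = a − y`) and
`x̂ = P(x̂ − S(Σ c_j u_j))`, where `P` is componentwise soft-thresholding and `S` is the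
truncation to the indices where the sup-norm is attained. -/
theorem minimum_norm_interpolation_l1_fixed_point
    {m : ℕ} (u : Fin m → ℕ → ℝ)
    (hu0 : ∀ j, Tendsto (u j) atTop (𝓝 0)) (hu : LinearIndependent ℝ u)
    (y : Fin m → ℝ) (xhat : ℕ → ℝ) (hxhat : Summable fun i => |xhat i|) :
    ((∀ j, ∑' i, u j i * xhat i = y j) ∧
        ∀ x : ℕ → ℝ, Summable (fun i => |x i|) →
          (∀ j, ∑' i, u j i * x i = y j) → ∑' i, |xhat i| ≤ ∑' i, |x i|) ↔
      (∃ c : Fin m → ℝ,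
        (∀ j, ∑' i, u j i * xhat i = y j) ∧
        ∀ i : ℕ,
          xhat i =
            Real.sign (xhat i -
                (if |(∑ j, c j • u j) i| = ⨆ k, |(∑ j, c j • u j) k|
                  then (∑ j, c j • u j) i else 0)) *
              max (|xhat i -
                (if |(∑ j, c j • u j) i| = ⨆ k, |(∑ j, c j • u j) k|
                  then (∑ j, c j • u j) i else 0)| - 1) 0) := by
  have hVe : ∀ c : Fin m → ℝ, ∀ i, (∑ j, c j • u j) i = ∑ j, c j * u j i := by
    intro c i; simp [Finset.sum_apply]
  constructor
  · rintro ⟨hint, hmin⟩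
    by_cases h0 : ∀ i, xhat i = 0
    · refine ⟨0, hint, fun i => ?_⟩
      have hz : (∑ j, (0 : Fin m → ℝ) j • u j) = (0 : ℕ → ℝ) := by simp
      rw [hz]
      simp [h0 i, Real.sign_zero]
    · push_neg at h0
      obtain ⟨c, hb, hsum⟩ := exists_certificate u hu0 hu y xhat hxhat hint hmin h0
      set v : ℕ → ℝ := fun i => ∑ j, c j * u j i with hv
      obtain ⟨i₀, hi₀⟩ := h0
      -- termwise equality
      have hvb : ∃ C, ∀ i, |v i| ≤ C := ⟨1, hb⟩
      have hsm : Summable (fun i => v i * xhat i) := summable_mul_of_bdd hvb hxhat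
      have hterm : ∀ i, v i * xhat i = -|xhat i| := by
        intro i
        have hfnn : ∀ k, 0 ≤ |xhat k| + v k * xhat k := by
          intro k
          have h1 : |v k * xhat k| ≤ |xhat k| := by
            rw [abs_mul]
            calc |v k| * |xhat k| ≤ 1 * |xhat k| :=
                  mul_le_mul_of_nonneg_right (hb k) (abs_nonneg _)
              _ = |xhat k| := one_mul _
          have := neg_abs_le (v k * xhat k)
          linarith
        have hfs : Summable (fun k => |xhat k| + v k * xhat k) := hxhat.add hsm
        have hft : ∑' k, (|xhat k| + v k * xhat k) = 0 := by
          rw [Summable.tsum_add hxhat hsm, hsum]; ring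
        have hle := Summable.le_tsum hfs i (fun k _ => hfnn k)
        rw [hft] at hle
        have := hfnn i
        linarith
      have hsign : ∀ i, xhat i ≠ 0 → v i = -Real.sign (xhat i) := by
        intro i hi
        have h1 := hterm i
        rcases lt_trichotomy (xhat i) 0 with h | h | h
        · have h2 : v i * xhat i = 1 * xhat i := by
            rw [h1, abs_of_neg h]; ring
          have h3 : v i = 1 := mul_right_cancel₀ hi h2
          rw [h3, Real.sign_of_neg h]; ring
        · exact absurd h hi
        · have h2 : v i * xhat i = -1 * xhat i := by
            rw [h1, abs_of_pos h]; ring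
          have h3 : v i = -1 := mul_right_cancel₀ hi h2
          rw [h3, Real.sign_of_pos h]
      have hvi₀ : |v i₀| = 1 := by
        rw [hsign i₀ hi₀, abs_neg, sign_abs_one hi₀]
      -- the supremum equals 1
      have hbdd : BddAbove (Set.range fun k => |v k|) := ⟨1, by rintro t ⟨k, rfl⟩; exact hb k⟩
      have hT : (⨆ k, |v k|) = 1 := by
        refine le_antisymm (ciSup_le hb) ?_
        rw [← hvi₀]
        exact le_ciSup hbdd i₀
      refine ⟨c, hint, fun i => ?_⟩
      have hVv : (∑ j, c j • u j) = v := funext fun i => hVe c i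
      rw [hVv, hT]
      rw [soft_fixed_iff]
      by_cases hi : xhat i = 0
      · refine Or.inl ⟨hi, ?_⟩
        split_ifs with h
        · exact hb i
        · simp
      · refine Or.inr ⟨hi, ?_⟩
        have h1 : |v i| = 1 := by rw [hsign i hi, abs_neg, sign_abs_one hi]
        rw [if_pos h1, hsign i hi]
  · rintro ⟨c, hint, hfix⟩
    refine ⟨hint, fun x hx hxz => ?_⟩
    set v : ℕ → ℝ := fun i => ∑ j, c j * u j i with hv
    have hVv : (∑ j, c j • u j) = v := funext fun i => hVe c i
    rw [hVv] at hfix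
    have hfix' : ∀ i, (xhat i = 0 ∧ |if |v i| = ⨆ k, |v k| then v i else 0| ≤ 1) ∨
        (xhat i ≠ 0 ∧ (if |v i| = ⨆ k, |v k| then v i else 0) = -Real.sign (xhat i)) := by
      intro i
      rw [← soft_fixed_iff]
      exact hfix i
    by_cases h0 : ∀ i, xhat i = 0
    · have : (fun i => |xhat i|) = fun _ => (0:ℝ) := funext fun i => by rw [h0 i, abs_zero]
      rw [this, tsum_zero]
      exact tsum_nonneg (fun i => abs_nonneg _)
    · push_neg at h0
      obtain ⟨i₀, hi₀⟩ := h0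
      -- v tends to 0, bounded sup
      have hv0 : Tendsto v atTop (𝓝 0) := by
        have : Tendsto (fun i => ∑ j, c j * u j i) atTop (𝓝 (∑ j : Fin m, (0:ℝ))) := by
          refine tendsto_finset_sum _ (fun j _ => ?_)
          simpa using ((hu0 j).const_mul (c j))
        simpa using this
      have hbdd : BddAbove (Set.range fun k => |v k|) := by
        have h : Tendsto (fun k => |v k|) atTop (𝓝 0) := by simpa using hv0.abs
        exact h.bddAbove_range
      -- at i₀ the condition must hold and sup = 1
      have hcond : ∀ i, xhat i ≠ 0 → v i = -Real.sign (xhat i) ∧ |v i| = ⨆ k, |v k| := by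
        intro i hi
        rcases hfix' i with ⟨h1, _⟩ | ⟨_, h2⟩
        · exact absurd h1 hi
        · by_cases hc : |v i| = ⨆ k, |v k|
          · rw [if_pos hc] at h2; exact ⟨h2, hc⟩
          · rw [if_neg hc] at h2
            exfalso
            have hs1 := sign_abs_one hi
            have hs0 : Real.sign (xhat i) = 0 := by linarith [h2]
            rw [hs0] at hs1
            norm_num at hs1
      have hT : (⨆ k, |v k|) = 1 := by
        obtain ⟨h1, h2⟩ := hcond i₀ hi₀
        rw [← h2, h1, abs_neg, sign_abs_one hi₀]
      have hb1 : ∀ i, |v i| ≤ 1 := by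
        intro i
        rw [← hT]
        exact le_ciSup hbdd i
      -- termwise: -(v i * xhat i) = |xhat i|
      have hterm : ∀ i, v i * xhat i = -|xhat i| := by
        intro i
        by_cases hi : xhat i = 0
        · rw [hi, abs_zero, mul_zero, neg_zero]
        · rw [(hcond i hi).1]
          have := real_sign_mul_self (xhat i)
          linear_combination -this
      have hsm : Summable (fun i => v i * xhat i) := summable_mul_of_bdd ⟨1, hb1⟩ hxhat
      have hsmx : Summable (fun i => v i * x i) := summable_mul_of_bdd ⟨1, hb1⟩ hx
      have e1 : ∑' i, |xhat i| = -∑' i, v i * xhat i := by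
        rw [← tsum_neg]
        congr 1
        funext i
        rw [hterm i]; ring
      have e2 : ∑' i, v i * xhat i = ∑' i, v i * x i := by
        rw [hv]
        have t1 := tsum_v_mul hu0 c hxhat
        have t2 := tsum_v_mul hu0 c hx
        rw [t1, t2]
        refine Finset.sum_congr rfl fun j _ => ?_
        rw [hint j, hxz j]
      rw [e1, e2]
      have h3 : ∀ i, -(v i * x i) ≤ |x i| := by
        intro i
        have h4 : |v i * x i| ≤ |x i| := by
          rw [abs_mul]
          calc |v i| * |x i| ≤ 1 * |x i| := mul_le_mul_of_nonneg_right (hb1 i) (abs_nonneg _)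
            _ = |x i| := one_mul _
        have := neg_abs_le (v i * x i)
        linarith
      calc -∑' i, v i * x i = ∑' i, -(v i * x i) := tsum_neg.symm
        _ ≤ ∑' i, |x i| := Summable.tsum_le_tsum h3 hsmx.neg hx
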